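/- Define rational numbers b(n,k) for n ≥ 3 and 0 ≤ k ≤ n-3 by b(3,0) = 1 and the recursion b(n,k) = (n-3)·b(n-1,k) + (n+k-2)·b(n-1,k-1), with b(n,k) := 0 unless 0 ≤ k ≤ n-3. Then b(n, n-4) = (n-3)/3 · (2n-5)!! for all n ≥ 4. -/
import Mathlib


/-- With `b(n,k)` defined by `b(3,0) = 1`, the recursion
`b(n,k) = (n-3)·b(n-1,k) + (n+k-2)·b(n-1,k-1)`, and `b(n,k) = 0` unless
`0 ≤ k ≤ n-3`, one has `b(n, n-4) = (n-3)/3 · (2n-5)!!` for all `n ≥ 4`. -/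
theorem subtop_coefficient_formula (b : ℕ → ℤ → ℚ)
    (h0 : ∀ (n : ℕ) (k : ℤ), (k < 0 ∨ (n : ℤ) - 3 < k ∨ n < 3) → b n k = 0)
    (h1 : b 3 0 = 1)
    (hrec : ∀ n : ℕ, 4 ≤ n → ∀ k : ℤ, 0 ≤ k → k ≤ (n : ℤ) - 3 →
      b n k = ((n : ℚ) - 3) * b (n - 1) k + ((n : ℚ) + (k : ℚ) - 2) * b (n - 1) (k - 1)) :
    ∀ n : ℕ, 4 ≤ n →
      b n ((n : ℤ) - 4) = (((n : ℚ) - 3) / 3) * (Nat.doubleFactorial (2 * n - 5) : ℚ) := by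
  have top : ∀ n : ℕ, 3 ≤ n → b n ((n : ℤ) - 3) = (Nat.doubleFactorial (2 * n - 5) : ℚ) := by
    intro n hn
    induction n, hn using Nat.le_induction with
    | base => simpa using h1
    | succ n hn ih =>
      have hr := hrec (n + 1) (by omega) ((n : ℤ) + 1 - 3) (by push_cast; omega)
        (by push_cast; omega)
      have hz : b (n + 1 - 1) ((n : ℤ) + 1 - 3) = 0 := by
        apply h0; right; left; push_cast; omega
      have hk : ((n : ℤ) + 1 - 3 - 1) = (n : ℤ) - 3 := by ring
      rw [hz, hk] at hr
      have hd : 2 * (n + 1) - 5 = (2 * n - 5) + 2 := by omega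
      have hd2 : ((2 * n - 5 : ℕ) : ℚ) = 2 * (n : ℚ) - 5 := by
        rw [Nat.cast_sub (by omega)]; push_cast; ring
      rw [hd, Nat.doubleFactorial_add_two]
      have : (((n : ℕ) + 1 : ℕ) : ℤ) - 3 = ((n : ℤ) + 1 - 3) := by push_cast; ring
      rw [show ((n + 1 : ℕ) : ℤ) - 3 = (n : ℤ) + 1 - 3 by push_cast; ring, hr,
        Nat.add_sub_cancel, ih]
      push_cast [hd2]
      ring
  intro n hn
  induction n, hn using Nat.le_induction with
  | base =>
    have hz : b 3 (-1) = 0 := h0 3 (-1) (by norm_num)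
    have hr := hrec 4 (by norm_num) 0 (by norm_num) (by norm_num)
    norm_num [hz, h1] at hr
    norm_num [hr, Nat.doubleFactorial]
  | succ n hn ih =>
    have hr := hrec (n + 1) (by omega) ((n : ℤ) + 1 - 4) (by push_cast; omega)
      (by push_cast; omega)
    rw [Nat.add_sub_cancel] at hr
    have htop : b n ((n : ℤ) + 1 - 4) = (Nat.doubleFactorial (2 * n - 5) : ℚ) := by
      rw [show (n : ℤ) + 1 - 4 = (n : ℤ) - 3 by ring]
      exact top n (by omega)
    have hsub : b n ((n : ℤ) + 1 - 4 - 1)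
        = (((n : ℚ) - 3) / 3) * (Nat.doubleFactorial (2 * n - 5) : ℚ) := by
      rw [show (n : ℤ) + 1 - 4 - 1 = (n : ℤ) - 4 by ring]
      exact ih
    rw [htop, hsub] at hr
    have hd : 2 * (n + 1) - 5 = (2 * n - 5) + 2 := by omega
    have hd2 : ((2 * n - 5 : ℕ) : ℚ) = 2 * (n : ℚ) - 5 := by
      rw [Nat.cast_sub (by omega)]; push_cast; ring
    rw [show ((n + 1 : ℕ) : ℤ) - 4 = (n : ℤ) + 1 - 4 by push_cast; ring, hr,
      hd, Nat.doubleFactorial_add_two]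
    push_cast [hd2]
    ring
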